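/- Let c be a monotonic cost function. If A obeys c and B obeys c, then A ⊕ B obeys c, where A ⊕ B = {2x : x ∈ A} ∪ {2x+1 : x ∈ B}. -/

import Mathlib

/-- A cost function: computable and nonnegative. -/
def IsCostFunction (c : ℕ → ℕ → ℚ) : Prop :=
  Computable₂ c ∧ ∀ x s, 0 ≤ c x s

/-- The cost of the change from stage `s-1` to stage `s`: `c x s` for the least
`x < s` that changes, and `0` if there is no such `x`. -/
def stageCost (c : ℕ → ℕ → ℚ) (A : ℕ → ℕ → Bool) (s : ℕ) : ℚ :=
  if h : ∃ x, x < s ∧ A (s - 1) x ≠ A s x then c (Nat.find h) s else 0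

/-- `A` is a computable approximation of the set `L`: a computable sequence of
finite sets converging pointwise to `L`. -/
def IsCompApprox (A : ℕ → ℕ → Bool) (L : ℕ → Bool) : Prop :=
  Computable₂ A ∧ (∀ s, Set.Finite {x | A s x = true}) ∧
    ∀ x, ∃ N, ∀ s, N ≤ s → A s x = L x

/-- The total cost of the approximation `A` is bounded by `q`. -/
def ObeysWith (c : ℕ → ℕ → ℚ) (A : ℕ → ℕ → Bool) (q : ℚ) : Prop :=
  ∀ n, ∑ s ∈ Finset.range n, stageCost c A s ≤ q

/-- A (Δ⁰₂) set `L` obeys the cost function `c`. -/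
def Obeys (c : ℕ → ℕ → ℚ) (L : ℕ → Bool) : Prop :=
  ∃ A, IsCompApprox A L ∧ ∃ q, ObeysWith c A q

/-- Monotonic: non-increasing in the main argument, zero for `x > s`,
non-decreasing in the stage. -/
def MonotonicCF (c : ℕ → ℕ → ℚ) : Prop :=
  (∀ x s, c (x + 1) s ≤ c x s) ∧ (∀ x s, s < x → c x s = 0) ∧
    ∀ x s, c x s ≤ c x (s + 1)

/-- The limit condition: `lim_x liminf_s c(x,s) = 0`. -/
def LimitCondition (c : ℕ → ℕ → ℚ) : Prop :=
  ∀ e : ℕ, ∃ x0, ∀ x, x0 ≤ x → ∀ t, ∃ s, t ≤ s ∧ c x s ≤ ((2 : ℚ) ^ e)⁻¹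

/-- `L` is computably enumerable. -/
def CEset (L : ℕ → Bool) : Prop :=
  ∃ f : ℕ →. Unit, Partrec f ∧ ∀ x, (f x).Dom ↔ L x = true

/-- The join `A ⊕ B`. -/
def join (A B : ℕ → Bool) : ℕ → Bool :=
  fun n => if n % 2 = 0 then A (n / 2) else B (n / 2)

lemma stageCost_nonneg (c : ℕ → ℕ → ℚ) (hc : ∀ x s, 0 ≤ c x s)
    (A : ℕ → ℕ → Bool) (s : ℕ) : 0 ≤ stageCost c A s := by
  unfold stageCost
  split
  · exact hc _ _
  · exact le_refl 0

lemma stageCost_join_le (c : ℕ → ℕ → ℚ) (hc : ∀ x s, 0 ≤ c x s)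
    (hm : MonotonicCF c) (A' B' : ℕ → ℕ → Bool) (s : ℕ) :
    stageCost c (fun t => join (A' t) (B' t)) s
      ≤ stageCost c A' s + stageCost c B' s := by
  have hanti : ∀ s : ℕ, Antitone (fun x => c x s) := fun s =>
    antitone_nat_of_succ_le (fun n => hm.1 n s)
  by_cases hJ : ∃ x, x < s ∧ join (A' (s-1)) (B' (s-1)) x ≠ join (A' s) (B' s) x
  · have hstep : stageCost c (fun t => join (A' t) (B' t)) s = c (Nat.find hJ) s := by
      unfold stageCost; rw [dif_pos hJ]
    rw [hstep]
    obtain ⟨hlt, hne⟩ := Nat.find_spec hJ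
    set n := Nat.find hJ with hn
    by_cases h2 : n % 2 = 0
    · have hne' : A' (s-1) (n/2) ≠ A' s (n/2) := by
        simpa [join, h2] using hne
      have hEx : ∃ x, x < s ∧ A' (s-1) x ≠ A' s x :=
        ⟨n/2, lt_of_le_of_lt (Nat.div_le_self n 2) hlt, hne'⟩
      have hfind : Nat.find hEx ≤ n :=
        le_trans (Nat.find_min' hEx ⟨lt_of_le_of_lt (Nat.div_le_self n 2) hlt, hne'⟩)
          (Nat.div_le_self n 2)
      have h1 : c n s ≤ c (Nat.find hEx) s := hanti s hfind
      have h2' : stageCost c A' s = c (Nat.find hEx) s := by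
        unfold stageCost; rw [dif_pos hEx]
      have h3 := stageCost_nonneg c hc B' s
      linarith
    · have hne' : B' (s-1) (n/2) ≠ B' s (n/2) := by
        simpa [join, h2] using hne
      have hEx : ∃ x, x < s ∧ B' (s-1) x ≠ B' s x :=
        ⟨n/2, lt_of_le_of_lt (Nat.div_le_self n 2) hlt, hne'⟩
      have hfind : Nat.find hEx ≤ n :=
        le_trans (Nat.find_min' hEx ⟨lt_of_le_of_lt (Nat.div_le_self n 2) hlt, hne'⟩)
          (Nat.div_le_self n 2)
      have h1 : c n s ≤ c (Nat.find hEx) s := hanti s hfind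
      have h2' : stageCost c B' s = c (Nat.find hEx) s := by
        unfold stageCost; rw [dif_pos hEx]
      have h3 := stageCost_nonneg c hc A' s
      linarith
  · have hstep : stageCost c (fun t => join (A' t) (B' t)) s = 0 := by
      unfold stageCost; rw [dif_neg hJ]
    rw [hstep]
    exact add_nonneg (stageCost_nonneg c hc A' s) (stageCost_nonneg c hc B' s)

/-- If `A` and `B` obey a monotonic cost function `c`, then so
does `A ⊕ B`. -/
theorem stmt9 (c : ℕ → ℕ → ℚ) (hc : IsCostFunction c) (hm : MonotonicCF c)
    (A B : ℕ → Bool) (hA : Obeys c A) (hB : Obeys c B) :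
    Obeys c (join A B) := by
  obtain ⟨A', ⟨hAc, hAfin, hAconv⟩, qA, hAq⟩ := hA
  obtain ⟨B', ⟨hBc, hBfin, hBconv⟩, qB, hBq⟩ := hB
  refine ⟨fun s => join (A' s) (B' s), ⟨?_, ?_, ?_⟩, qA + qB, ?_⟩
  · -- computability
    have hdiv : Computable (fun p : ℕ × ℕ => p.2 / 2) :=
      ((Primrec.nat_div.comp Primrec.snd (Primrec.const 2)).to_comp)
    have h1 : Computable (fun p : ℕ × ℕ => A' p.1 (p.2 / 2)) :=
      hAc.comp Computable.fst hdiv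
    have h2 : Computable (fun p : ℕ × ℕ => B' p.1 (p.2 / 2)) :=
      hBc.comp Computable.fst hdiv
    have hcond : Computable (fun p : ℕ × ℕ => decide (p.2 % 2 = 0)) :=
      (PrimrecRel.comp Primrec.eq
        (Primrec.nat_mod.comp Primrec.snd (Primrec.const 2))
        (Primrec.const 0)).decide.to_comp
    have heq : (fun p : ℕ × ℕ => join (A' p.1) (B' p.1) p.2)
        = fun p : ℕ × ℕ =>
            cond (decide (p.2 % 2 = 0)) (A' p.1 (p.2 / 2)) (B' p.1 (p.2 / 2)) := by
      funext p
      by_cases h : p.2 % 2 = 0 <;> simp [join, h]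
    show Computable fun p : ℕ × ℕ => join (A' p.1) (B' p.1) p.2
    rw [heq]
    exact Computable.cond hcond h1 h2
  · -- finiteness
    intro s
    apply Set.Finite.subset
      (Set.Finite.union
        (Set.Finite.image (fun x => 2 * x) (hAfin s))
        (Set.Finite.image (fun x => 2 * x + 1) (hBfin s)))
    intro n hn
    simp only [Set.mem_setOf_eq] at hn
    by_cases h : n % 2 = 0
    · left
      refine ⟨n / 2, ?_, ?_⟩
      · simpa [join, h] using hn
      · show 2 * (n / 2) = n; omega
    · right
      refine ⟨n / 2, ?_, ?_⟩
      · simpa [join, h] using hn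
      · show 2 * (n / 2) + 1 = n; omega
  · -- convergence
    intro n
    obtain ⟨NA, hNA⟩ := hAconv (n / 2)
    obtain ⟨NB, hNB⟩ := hBconv (n / 2)
    refine ⟨max NA NB, fun s hs => ?_⟩
    by_cases h : n % 2 = 0 <;>
      simp [join, h, hNA s (le_trans (le_max_left _ _) hs),
        hNB s (le_trans (le_max_right _ _) hs)]
  · -- cost bound
    intro n
    calc ∑ s ∈ Finset.range n, stageCost c (fun t => join (A' t) (B' t)) s
        ≤ ∑ s ∈ Finset.range n, (stageCost c A' s + stageCost c B' s) :=
          Finset.sum_le_sum fun s _ => stageCost_join_le c hc.2 hm A' B' s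
      _ = (∑ s ∈ Finset.range n, stageCost c A' s)
            + ∑ s ∈ Finset.range n, stageCost c B' s := Finset.sum_add_distrib
      _ ≤ qA + qB := add_le_add (hAq n) (hBq n)
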